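/- Concentration onto the pseudo-true parameter value: Assume the hypotheses of the posterior-concentration theorem (either the polynomial- or exponential-deviation case), so that Π_ε[{θ : d(b(θ), b₀) ≥ ε* + δ_n} | η_n(y)] → 0 in P₀-probability for some sequence δ_n → 0, where ε* := inf_{θ∈Θ} d(b₀, b(θ)) > 0. Suppose further that θ* := argmin_{θ∈Θ} d(b₀, b(θ)) exists and is well-separated, i.e., for every δ > 0 there exists γ(δ) > 0 such that inf over all θ ∈ Θ with d₁(θ, θ*) > δ of d(b(θ), b₀) is at least ε* + γ(δ) (d₁ a metric on Θ). Then for every δ > 0, the ABC posterior mass Π_ε[{θ ∈ Θ : d₁(θ, θ*) > δ} | η_n(y)] converges to 0 in P₀-probability as n → ∞. -/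

import Mathlib

open MeasureTheory Filter Real

/-- **Concentration onto the pseudo-true parameter value** (Corollary 1 of Frazier,
Robert & Rousseau). Assuming the conclusion of the posterior-concentration theorem,
`Π_ε[{θ : d(b(θ), b₀) ≥ ε* + δ_n} | η_n(y)] → 0` in `P₀`-probability for some `δ_n → 0`,
with `ε* = inf_{θ∈Θ} d(b₀, b(θ)) > 0`, and that the minimizer `θ*` exists and is
well-separated, the ABC posterior mass of `{θ ∈ Θ : d₁(θ, θ*) > δ}` tends to `0`
in `P₀`-probability for every `δ > 0`. -/
theorem abc_posterior_concentration_pseudo_true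
    {kθ kη : ℕ}
    {Ω : Type*} [MeasurableSpace Ω]
    (P₀ : Measure Ω) [IsProbabilityMeasure P₀]
    -- parameter space: a measurable subset of ℝ^{kθ} carrying the prior Π and a metric d₁
    (Θ : Set (EuclideanSpace ℝ (Fin kθ))) (hΘ : MeasurableSet Θ)
    (Pr : Measure (EuclideanSpace ℝ (Fin kθ))) [IsProbabilityMeasure Pr]
    (d₁ : EuclideanSpace ℝ (Fin kθ) → EuclideanSpace ℝ (Fin kθ) → ℝ)
    (hd₁_self : ∀ x, d₁ x x = 0)
    (hd₁_eq : ∀ x y, d₁ x y = 0 → x = y)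
    (hd₁_symm : ∀ x y, d₁ x y = d₁ y x)
    (hd₁_tri : ∀ x y z, d₁ x z ≤ d₁ x y + d₁ y z)
    -- d is a metric on ℝ^{kη}
    (d : EuclideanSpace ℝ (Fin kη) → EuclideanSpace ℝ (Fin kη) → ℝ)
    (hd_self : ∀ x, d x x = 0)
    (hd_eq : ∀ x y, d x y = 0 → x = y)
    (hd_symm : ∀ x y, d x y = d y x)
    (hd_tri : ∀ x y z, d x z ≤ d x y + d y z)
    -- laws of the simulated summary statistics, measurable in θ
    (μ : ℕ → EuclideanSpace ℝ (Fin kθ) → Measure (EuclideanSpace ℝ (Fin kη)))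
    (hμ_prob : ∀ n θ, IsProbabilityMeasure (μ n θ))
    (hμ_meas : ∀ (n : ℕ) (s : Set (EuclideanSpace ℝ (Fin kη))), MeasurableSet s →
      Measurable fun θ => μ n θ s)
    -- observed summary statistics
    (η : ℕ → Ω → EuclideanSpace ℝ (Fin kη))
    (hη_meas : ∀ n, Measurable (η n))
    -- binding function and limit of the observed summaries
    (b : EuclideanSpace ℝ (Fin kθ) → EuclideanSpace ℝ (Fin kη)) (hb_cont : ContinuousOn b Θ)
    (hb_inj : Set.InjOn b Θ)
    (b₀ : EuclideanSpace ℝ (Fin kη))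
    -- ε* = inf_{θ∈Θ} d(b₀, b(θ)) > 0
    (εstar : ℝ) (hεstar : IsGLB ((fun θ => d b₀ (b θ)) '' Θ) εstar)
    (hεstar_pos : 0 < εstar)
    -- tolerance sequence
    (ε : ℕ → ℝ)
    -- θ* = argmin_{θ∈Θ} d(b₀, b(θ)), well separated
    (θstar : EuclideanSpace ℝ (Fin kθ)) (hθstar_mem : θstar ∈ Θ)
    (hθstar_min : d b₀ (b θstar) = εstar)
    (hsep : ∀ δ : ℝ, 0 < δ → ∃ γ : ℝ, 0 < γ ∧
      ∀ θ ∈ Θ, δ < d₁ θ θstar → εstar + γ ≤ d (b θ) b₀)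
    -- conclusion of the posterior-concentration theorem, for some δ_n → 0
    (δseq : ℕ → ℝ) (hδ0 : Tendsto δseq atTop (nhds 0))
    (hconc : TendstoInMeasure P₀
      (fun n ω =>
        (∫ θ in {θ ∈ Θ | εstar + δseq n ≤ d (b θ) b₀},
            (μ n θ {t | d t (η n ω) ≤ ε n}).toReal ∂Pr) /
        (∫ θ in Θ, (μ n θ {t | d t (η n ω) ≤ ε n}).toReal ∂Pr))
      atTop (fun _ => 0)) :
    ∀ δ : ℝ, 0 < δ →
      TendstoInMeasure P₀
        (fun n ω =>
          (∫ θ in {θ ∈ Θ | δ < d₁ θ θstar},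
              (μ n θ {t | d t (η n ω) ≤ ε n}).toReal ∂Pr) /
          (∫ θ in Θ, (μ n θ {t | d t (η n ω) ≤ ε n}).toReal ∂Pr))
        atTop (fun _ => 0) := by
  intro δ hδ
  obtain ⟨γ, hγ, hγsep⟩ := hsep δ hδ
  have hev : ∀ᶠ n in atTop, δseq n ≤ γ :=
    (hδ0.eventually_lt_const hγ).mono fun n hn => hn.le
  -- pointwise bound |f n ω| ≤ |g n ω| for n with δseq n ≤ γ
  have key : ∀ n, δseq n ≤ γ → ∀ ω : Ω,
      |(∫ θ in {θ ∈ Θ | δ < d₁ θ θstar},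
          (μ n θ {t | d t (η n ω) ≤ ε n}).toReal ∂Pr) /
        (∫ θ in Θ, (μ n θ {t | d t (η n ω) ≤ ε n}).toReal ∂Pr)| ≤
      |(∫ θ in {θ ∈ Θ | εstar + δseq n ≤ d (b θ) b₀},
          (μ n θ {t | d t (η n ω) ≤ ε n}).toReal ∂Pr) /
        (∫ θ in Θ, (μ n θ {t | d t (η n ω) ≤ ε n}).toReal ∂Pr)| := by
    intro n hn ω
    set F : EuclideanSpace ℝ (Fin kθ) → ℝ :=
      fun θ => (μ n θ {t | d t (η n ω) ≤ ε n}).toReal with hF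
    have hFnn : ∀ θ, 0 ≤ F θ := fun θ => ENNReal.toReal_nonneg
    have hAB : {θ ∈ Θ | δ < d₁ θ θstar} ⊆
        {θ ∈ Θ | εstar + δseq n ≤ d (b θ) b₀} := by
      rintro θ ⟨hθΘ, hθd⟩
      exact ⟨hθΘ, le_trans (add_le_add_right hn εstar) (hγsep θ hθΘ hθd)⟩
    by_cases hInt : IntegrableOn F Θ Pr
    · have hBΘ : {θ ∈ Θ | εstar + δseq n ≤ d (b θ) b₀} ⊆ Θ := Set.sep_subset _ _
      have hIB : IntegrableOn F {θ ∈ Θ | εstar + δseq n ≤ d (b θ) b₀} Pr :=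
        hInt.mono_set hBΘ
      have hnum : (∫ θ in {θ ∈ Θ | δ < d₁ θ θstar}, F θ ∂Pr) ≤
          ∫ θ in {θ ∈ Θ | εstar + δseq n ≤ d (b θ) b₀}, F θ ∂Pr :=
        setIntegral_mono_set hIB (Filter.Eventually.of_forall hFnn)
          (HasSubset.Subset.eventuallyLE hAB)
      have hAnn : 0 ≤ ∫ θ in {θ ∈ Θ | δ < d₁ θ θstar}, F θ ∂Pr :=
        setIntegral_nonneg_of_ae_restrict (Filter.Eventually.of_forall hFnn)
      have hBnn : 0 ≤ ∫ θ in {θ ∈ Θ | εstar + δseq n ≤ d (b θ) b₀}, F θ ∂Pr :=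
        setIntegral_nonneg_of_ae_restrict (Filter.Eventually.of_forall hFnn)
      have hDnn : 0 ≤ ∫ θ in Θ, F θ ∂Pr :=
        setIntegral_nonneg_of_ae_restrict (Filter.Eventually.of_forall hFnn)
      rcases eq_or_lt_of_le hDnn with hD0 | hDpos
      · rw [← hD0]
        simp
      · rw [abs_of_nonneg (div_nonneg hAnn hDnn), abs_of_nonneg (div_nonneg hBnn hDnn)]
        exact div_le_div_of_nonneg_right hnum hDpos.le
    · have hD0 : (∫ θ in Θ, F θ ∂Pr) = 0 := integral_undef hInt
      rw [hD0]
      simp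
  -- conclude convergence in measure
  intro ε' hε'
  have hg := hconc ε' hε'
  refine tendsto_of_tendsto_of_tendsto_of_le_of_le' tendsto_const_nhds hg
    (Filter.Eventually.of_forall fun n => zero_le) ?_
  filter_upwards [hev] with n hn
  refine measure_mono fun ω hω => ?_
  simp only [Set.mem_setOf_eq, Real.dist_0_eq_abs] at hω ⊢
  calc ε' ≤ _ := hω
  _ ≤ _ := by
    rw [edist_dist, edist_dist, Real.dist_0_eq_abs, Real.dist_0_eq_abs]
    exact ENNReal.ofReal_le_ofReal (key n hn ω)
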